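/- Let r ≥ 1 be an integer and let G be a connected subcubic simple graph containing at least one vertex of degree 3. Then there is a locally injective homomorphism from G to the complete graph K_4 if and only if there is a locally injective homomorphism from the r-subdivision G^r to the r-subdivision K_4^r. -/

import Mathlib

/-- Representatives of internal vertices of the `k`-subdivision of `G`:
a dart `d` of `G` together with a position `i : Fin k`; the pair `(d, i)` is
identified with `(d.symm, k - 1 - i)`. -/
def SubdivRep {V : Type*} (G : SimpleGraph V) (k : ℕ) :
    G.Dart × Fin k → G.Dart × Fin k → Prop :=
  fun a b => b.1 = a.1.symm ∧ (b.2 : ℕ) = k - 1 - (a.2 : ℕ)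

/-- Internal vertices of the `k`-subdivision of `G`. -/
abbrev SubdivInternal {V : Type*} (G : SimpleGraph V) (k : ℕ) :=
  Quot (SubdivRep G k)

/-- Vertices of the `k`-subdivision of `G`: the branch vertices (`Sum.inl`)
are the original vertices of `G`, and `Sum.inr` are the internal vertices. -/
abbrev SubdivVertex {V : Type*} (G : SimpleGraph V) (k : ℕ) :=
  V ⊕ SubdivInternal G k

/-- One-directional adjacency for the `k`-subdivision: a branch vertex `u` is
adjacent to the first internal vertex of any edge of `G` leaving `u` (via the
identification, also to the last internal vertex of any edge entering `u`),
and consecutive internal vertices on a subdivided edge are adjacent. -/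
def SubdivAdjBase {V : Type*} (G : SimpleGraph V) (k : ℕ) :
    SubdivVertex G k → SubdivVertex G k → Prop
  | Sum.inl u, Sum.inr x =>
      ∃ (d : G.Dart) (i : Fin k), (i : ℕ) = 0 ∧ d.toProd.1 = u ∧
        x = Quot.mk (SubdivRep G k) (d, i)
  | Sum.inr x, Sum.inr y =>
      ∃ (d : G.Dart) (i j : Fin k), (j : ℕ) = (i : ℕ) + 1 ∧
        x = Quot.mk (SubdivRep G k) (d, i) ∧ y = Quot.mk (SubdivRep G k) (d, j)
  | _, _ => False

/-- The `k`-subdivision of a simple graph `G`: every edge `uv` of `G` is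
replaced by a path from `u` to `v` through `k` new internal vertices. -/
def Subdivision {V : Type*} (G : SimpleGraph V) (k : ℕ) :
    SimpleGraph (SubdivVertex G k) where
  Adj x y := x ≠ y ∧ (SubdivAdjBase G k x y ∨ SubdivAdjBase G k y x)
  symm := ⟨fun x y h => ⟨Ne.symm h.1, h.2.symm⟩⟩
  loopless := ⟨fun x h => h.1 rfl⟩

/-- A homomorphism `f : G →g H` is locally bijective if for every vertex `u`
the restriction of `f` to the open neighbourhood of `u`, viewed as a map into
the open neighbourhood of `f u`, is a bijection. -/
def GraphHomLocallyBijective {V W : Type*} {G : SimpleGraph V} {H : SimpleGraph W}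
    (f : G →g H) : Prop :=
  ∀ u : V, Set.BijOn f (G.neighborSet u) (H.neighborSet (f u))

/-- A homomorphism `f : G →g H` is locally surjective if for every vertex `u`
the restriction of `f` to the open neighbourhood of `u`, viewed as a map into
the open neighbourhood of `f u`, is surjective. -/
def GraphHomLocallySurjective {V W : Type*} {G : SimpleGraph V} {H : SimpleGraph W}
    (f : G →g H) : Prop :=
  ∀ u : V, Set.SurjOn f (G.neighborSet u) (H.neighborSet (f u))

/-- A homomorphism `f : G →g H` is locally injective if for every vertex `u`
the restriction of `f` to the open neighbourhood of `u`, viewed as a map into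
the open neighbourhood of `f u`, is injective. -/
def GraphHomLocallyInjective {V W : Type*} {G : SimpleGraph V} {H : SimpleGraph W}
    (f : G →g H) : Prop :=
  ∀ u : V, Set.InjOn f (G.neighborSet u)

section Aux
open SimpleGraph

variable {V W : Type*} {G : SimpleGraph V} {H : SimpleGraph W} {k : ℕ}

namespace Subdiv

lemma rep_symm {a b : G.Dart × Fin k} (h : SubdivRep G k a b) : SubdivRep G k b a := by
  obtain ⟨h1, h2⟩ := h
  refine ⟨by rw [h1, SimpleGraph.Dart.symm_symm], ?_⟩
  have := a.2.isLt
  omega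

lemma quot_eq' {a b : G.Dart × Fin k} :
    Quot.mk (SubdivRep G k) a = Quot.mk (SubdivRep G k) b ↔ a = b ∨ SubdivRep G k a b := by
  have key : ∀ a b : G.Dart × Fin k, Relation.EqvGen (SubdivRep G k) a b →
      a = b ∨ SubdivRep G k a b := by
    intro a b h
    induction h with
    | rel x y hxy => exact Or.inr hxy
    | refl x => exact Or.inl rfl
    | symm x y _ ih =>
      rcases ih with rfl | hr
      · exact Or.inl rfl
      · exact Or.inr (rep_symm hr)
    | trans x y z _ _ ih1 ih2 =>
      rcases ih1 with rfl | h1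
      · exact ih2
      · rcases ih2 with rfl | h2
        · exact Or.inr h1
        · obtain ⟨ha, hb⟩ := h1; obtain ⟨hc, hd⟩ := h2
          left
          have hx1 : x.1 = z.1 := by rw [hc, ha, SimpleGraph.Dart.symm_symm]
          have hx2 : (x.2 : ℕ) = (z.2 : ℕ) := by have := x.2.isLt; omega
          exact Prod.ext hx1 (Fin.ext hx2)
  constructor
  · intro h
    exact key a b (Quot.eq.mp h)
  · rintro (rfl | h)
    · rfl
    · exact Quot.sound h

lemma quot_eq {d e : G.Dart} {i j : Fin k} :
    Quot.mk (SubdivRep G k) (d, i) = Quot.mk (SubdivRep G k) (e, j) ↔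
      (d = e ∧ (i : ℕ) = (j : ℕ)) ∨ (e = d.symm ∧ (j : ℕ) = k - 1 - (i : ℕ)) := by
  rw [quot_eq']
  unfold SubdivRep
  simp [Prod.ext_iff, Fin.ext_iff]


/-- Internal vertex constructor. -/
abbrev mkI (G : SimpleGraph V) (k : ℕ) (d : G.Dart) (i : Fin k) : SubdivInternal G k :=
  Quot.mk (SubdivRep G k) (d, i)

lemma mkI_symm {d : G.Dart} {i j : Fin k} (h : (j : ℕ) = k - 1 - (i : ℕ)) :
    mkI G k d.symm i = mkI G k d j :=
  Quot.sound ⟨(SimpleGraph.Dart.symm_symm d).symm, h⟩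

lemma mkI_eq_iff {d e : G.Dart} {i j : Fin k} :
    mkI G k d i = mkI G k e j ↔
      (d = e ∧ (i : ℕ) = (j : ℕ)) ∨ (e = d.symm ∧ (j : ℕ) = k - 1 - (i : ℕ)) :=
  quot_eq

lemma mkI_same_iff {d : G.Dart} {i j : Fin k} :
    mkI G k d i = mkI G k d j ↔ (i : ℕ) = (j : ℕ) := by
  rw [mkI_eq_iff]
  constructor
  · rintro (⟨-, h⟩ | ⟨hd, -⟩)
    · exact h
    · exact absurd hd.symm (SimpleGraph.Dart.symm_ne d)
  · exact fun h => Or.inl ⟨rfl, h⟩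

/-- The predecessor of the `i`-th internal vertex on dart `d`. -/
def Pv (d : G.Dart) (i : Fin k) : SubdivVertex G k :=
  if _ : (i : ℕ) = 0 then Sum.inl d.fst
  else Sum.inr (mkI G k d ⟨(i : ℕ) - 1, by have := i.isLt; omega⟩)

/-- The successor of the `i`-th internal vertex on dart `d`. -/
def Sv (d : G.Dart) (i : Fin k) : SubdivVertex G k :=
  if h : (i : ℕ) = k - 1 then Sum.inl d.snd
  else Sum.inr (mkI G k d ⟨(i : ℕ) + 1, by have := i.isLt; omega⟩)

lemma Pv_ne_Sv (d : G.Dart) (i : Fin k) : Pv d i ≠ Sv d i := by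
  unfold Pv Sv
  split <;> split <;> intro h
  · exact SimpleGraph.Dart.fst_ne_snd d (Sum.inl.inj h)
  · exact Sum.inl_ne_inr h
  · exact Sum.inr_ne_inl h
  · rw [Sum.inr.injEq, mkI_same_iff] at h
    simp only at h
    omega

lemma adj_first (d : G.Dart) (i : Fin k) (hi : (i : ℕ) = 0) :
    (Subdivision G k).Adj (Sum.inl d.fst) (Sum.inr (mkI G k d i)) := by
  exact ⟨by simp, Or.inl ⟨d, i, hi, rfl, rfl⟩⟩

lemma adj_inl_elim {u : V} {y : SubdivVertex G k}
    (h : (Subdivision G k).Adj (Sum.inl u) y) :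
    ∃ d : G.Dart, d.fst = u ∧ ∃ i : Fin k, (i : ℕ) = 0 ∧ y = Sum.inr (mkI G k d i) := by
  rcases h with ⟨-, h | h⟩
  · rcases y with v | x
    · exact absurd h id
    · obtain ⟨d, i, hi, hd, hx⟩ := h
      exact ⟨d, hd, i, hi, by rw [hx]⟩
  · rcases y with v | x
    · exact absurd h id
    · exact absurd h id

lemma adj_Pv (d : G.Dart) (i : Fin k) :
    (Subdivision G k).Adj (Sum.inr (mkI G k d i)) (Pv d i) := by
  unfold Pv
  split
  · rename_i h0
    exact (adj_first d i h0).symm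
  · rename_i h0
    refine ⟨?_, Or.inr ⟨d, ⟨(i : ℕ) - 1, by have := i.isLt; omega⟩, i, by simp; omega, rfl, rfl⟩⟩
    intro h
    rw [Sum.inr.injEq, mkI_same_iff] at h
    simp only at h
    omega

lemma adj_Sv (d : G.Dart) (i : Fin k) :
    (Subdivision G k).Adj (Sum.inr (mkI G k d i)) (Sv d i) := by
  unfold Sv
  split
  · rename_i h0
    -- last internal vertex adjacent to the second endpoint:
    -- mkI d i = mkI d.symm ⟨0⟩ and d.symm.fst = d.snd
    have h1 : mkI G k d.symm ⟨0, i.pos⟩ = mkI G k d i :=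
      mkI_symm (by simpa using h0)
    rw [← h1]
    exact (adj_first d.symm ⟨0, i.pos⟩ rfl).symm
  · rename_i h0
    refine ⟨?_, Or.inl ⟨d, i, ⟨(i : ℕ) + 1, by have := i.isLt; omega⟩, by simp, rfl, rfl⟩⟩
    intro h
    rw [Sum.inr.injEq, mkI_same_iff] at h
    simp only at h
    omega


lemma nbhd_inr {d : G.Dart} {i : Fin k} {y : SubdivVertex G k}
    (h : (Subdivision G k).Adj (Sum.inr (mkI G k d i)) y) :
    y = Pv d i ∨ y = Sv d i := by
  have hik := i.isLt
  rcases h with ⟨hne, h | h⟩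
  · rcases y with v | x
    · exact absurd h id
    · obtain ⟨e, a, b, hb, hx, hy⟩ := h
      have hak := a.isLt; have hbk := b.isLt
      rcases mkI_eq_iff.mp hx with ⟨rfl, hia⟩ | ⟨he, ha⟩
      · right; unfold Sv; split
        · exfalso; omega
        · rw [hy, Sum.inr.injEq, mkI_same_iff]; simp; omega
      · left
        have hi1 : 1 ≤ (i : ℕ) := by omega
        unfold Pv; split
        · exfalso; omega
        · rw [hy, Sum.inr.injEq, he]
          exact mkI_symm (by simp; omega)
  · rcases y with v | x
    · obtain ⟨e, a, ha0, hev, hx⟩ := h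
      have hak := a.isLt
      rcases mkI_eq_iff.mp hx with ⟨rfl, hia⟩ | ⟨he2, ha⟩
      · left; unfold Pv; split
        · rw [← hev]
        · exfalso; omega
      · right; unfold Sv; split
        · rw [← hev, he2]; rfl
        · exfalso; omega
    · obtain ⟨e, a, b, hb, hy, hx⟩ := h
      have hak := a.isLt; have hbk := b.isLt
      rcases mkI_eq_iff.mp hx with ⟨rfl, hib⟩ | ⟨he2, hbv⟩
      · left; unfold Pv; split
        · exfalso; omega
        · rw [hy, Sum.inr.injEq, mkI_same_iff]; simp; omega
      · right; unfold Sv; split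
        · exfalso; omega
        · rw [hy, Sum.inr.injEq, he2]
          exact mkI_symm (by simp; omega)

lemma first_ne_first {d e : G.Dart} {i j : Fin k} (hi : (i : ℕ) = 0) (hj : (j : ℕ) = 0)
    (hfst : d.fst = e.fst) (hne : d ≠ e) : mkI G k d i ≠ mkI G k e j := by
  intro h
  rcases mkI_eq_iff.mp h with ⟨rfl, -⟩ | ⟨he, -⟩
  · exact hne rfl
  · subst he
    exact SimpleGraph.Dart.fst_ne_snd d hfst


/-- Image dart under a graph homomorphism. -/
def dartMap (f : G →g H) (d : G.Dart) : H.Dart := ⟨(f d.fst, f d.snd), f.map_adj d.adj⟩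

@[simp] lemma dartMap_fst (f : G →g H) (d : G.Dart) : (dartMap f d).fst = f d.fst := rfl
@[simp] lemma dartMap_snd (f : G →g H) (d : G.Dart) : (dartMap f d).snd = f d.snd := rfl

lemma dartMap_symm (f : G →g H) (d : G.Dart) : dartMap f d.symm = (dartMap f d).symm :=
  SimpleGraph.Dart.ext _ _ rfl

/-- The map induced on subdivision vertices by a graph homomorphism. -/
def subdivMap (f : G →g H) : SubdivVertex G k → SubdivVertex H k :=
  Sum.map f (Quot.map (fun p => (dartMap f p.1, p.2))
    (fun a b h => ⟨by show dartMap f b.1 = (dartMap f a.1).symm; rw [h.1, dartMap_symm], h.2⟩))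

@[simp] lemma subdivMap_inl (f : G →g H) (u : V) :
    subdivMap (k := k) f (Sum.inl u) = Sum.inl (f u) := rfl

@[simp] lemma subdivMap_inr (f : G →g H) (d : G.Dart) (i : Fin k) :
    subdivMap f (Sum.inr (mkI G k d i)) = Sum.inr (mkI H k (dartMap f d) i) := rfl

lemma subdivMap_Pv (f : G →g H) (d : G.Dart) (i : Fin k) :
    subdivMap f (Pv d i) = Pv (dartMap f d) i := by
  unfold Pv
  split <;> rfl

lemma subdivMap_Sv (f : G →g H) (d : G.Dart) (i : Fin k) :
    subdivMap f (Sv d i) = Sv (dartMap f d) i := by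
  unfold Sv
  split <;> rfl

lemma base_map (f : G →g H) {x y : SubdivVertex G k} (h : SubdivAdjBase G k x y) :
    SubdivAdjBase H k (subdivMap f x) (subdivMap f y) := by
  rcases x with u | x <;> rcases y with v | y
  · exact absurd h id
  · obtain ⟨d, i, hi, hd, hx⟩ := h
    exact ⟨dartMap f d, i, hi, by rw [← hd]; rfl, by rw [hx]; rfl⟩
  · exact absurd h id
  · obtain ⟨d, a, b, hb, hx, hy⟩ := h
    exact ⟨dartMap f d, a, b, hb, by rw [hx]; rfl, by rw [hy]; rfl⟩

lemma base_map_ne (f : G →g H) {x y : SubdivVertex G k} (h : SubdivAdjBase G k x y) :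
    subdivMap f x ≠ subdivMap f y := by
  rcases x with u | x <;> rcases y with v | y
  · exact absurd h id
  · simp [subdivMap]
  · exact absurd h id
  · obtain ⟨d, a, b, hb, hx, hy⟩ := h
    have hak := a.isLt; have hbk := b.isLt
    rw [hx, hy]
    show Sum.inr (mkI H k (dartMap f d) a) ≠ Sum.inr (mkI H k (dartMap f d) b)
    intro hc
    rw [Sum.inr.injEq, mkI_same_iff] at hc
    omega

/-- The homomorphism induced on subdivisions. -/
def subdivHom (f : G →g H) : Subdivision G k →g Subdivision H k where
  toFun := subdivMap f
  map_rel' := fun {x y} h => by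
    refine ⟨?_, h.2.imp (base_map f) (base_map f)⟩
    rcases h.2 with h' | h'
    · exact base_map_ne f h'
    · exact (base_map_ne f h').symm

@[simp] lemma subdivHom_apply (f : G →g H) (x : SubdivVertex G k) :
    subdivHom f x = subdivMap f x := rfl

lemma subdivHom_locInj (f : G →g H) (hf : GraphHomLocallyInjective f) :
    GraphHomLocallyInjective (subdivHom (k := k) f) := by
  intro x
  rcases x with u | x
  · intro a ha b hb hab
    rw [SimpleGraph.mem_neighborSet] at ha hb
    obtain ⟨d, hd, i, hi, rfl⟩ := adj_inl_elim ha
    obtain ⟨e, he, j, hj, rfl⟩ := adj_inl_elim hb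
    simp only [subdivHom_apply, subdivMap_inr] at hab
    have h2 : mkI H k (dartMap f d) i = mkI H k (dartMap f e) j := Sum.inr.inj hab
    have hik := i.isLt
    rcases mkI_eq_iff.mp h2 with ⟨hde, hij⟩ | ⟨hde, hij⟩
    · have hsnd : f d.snd = f e.snd := congrArg (fun t => t.snd) hde
      have hds : d.snd = e.snd := by
        refine hf u ?_ ?_ hsnd
        · rw [SimpleGraph.mem_neighborSet, ← hd]; exact d.adj
        · rw [SimpleGraph.mem_neighborSet, ← he]; exact e.adj
      have hde' : d = e := SimpleGraph.Dart.ext _ _ (Prod.ext (hd.trans he.symm) hds)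
      subst hde'
      rw [Sum.inr.injEq, mkI_same_iff]
      omega
    · exfalso
      have h3 : (dartMap f e).fst = (dartMap f d).snd := by rw [hde]; rfl
      simp only [dartMap_fst, dartMap_snd] at h3
      rw [he] at h3
      have hadj : G.Adj u d.snd := by rw [← hd]; exact d.adj
      exact (f.map_adj hadj).ne h3
  · intro a ha b hb hab
    rw [SimpleGraph.mem_neighborSet] at ha hb
    obtain ⟨⟨d, i⟩, rfl⟩ := Quot.exists_rep x
    have hPS : subdivMap f (Pv d i) ≠ subdivMap f (Sv d i) := by
      rw [subdivMap_Pv, subdivMap_Sv]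
      exact Pv_ne_Sv (dartMap f d) i
    rcases nbhd_inr ha with rfl | rfl <;> rcases nbhd_inr hb with rfl | rfl
    · rfl
    · exact absurd hab hPS
    · exact absurd hab.symm hPS
    · rfl


lemma step (f : Subdivision G k →g Subdivision H k) (hf : GraphHomLocallyInjective f)
    {d : G.Dart} {e : H.Dart} {i : Fin k}
    (hx : f (Sum.inr (mkI G k d i)) = Sum.inr (mkI H k e i))
    (hp : f (Pv d i) = Pv e i) : f (Sv d i) = Sv e i := by
  have h1 := f.map_adj (adj_Sv d i)
  rw [hx] at h1
  rcases nbhd_inr h1 with h2 | h2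
  · exfalso
    apply Pv_ne_Sv d i
    refine hf (Sum.inr (mkI G k d i)) ?_ ?_ (hp.trans h2.symm)
    · exact (SimpleGraph.mem_neighborSet _ _ _).mpr (adj_Pv d i)
    · exact (SimpleGraph.mem_neighborSet _ _ _).mpr (adj_Sv d i)
  · exact h2

lemma chain (f : Subdivision G k →g Subdivision H k) (hf : GraphHomLocallyInjective f)
    {d : G.Dart} {e : H.Dart} (hk : 0 < k)
    (h0 : f (Sum.inl d.fst) = Sum.inl e.fst)
    (h1 : f (Sum.inr (mkI G k d ⟨0, hk⟩)) = Sum.inr (mkI H k e ⟨0, hk⟩)) :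
    ∀ i : Fin k, f (Sum.inr (mkI G k d i)) = Sum.inr (mkI H k e i)
      ∧ f (Pv d i) = Pv e i := by
  have main : ∀ n : ℕ, ∀ hn : n < k,
      f (Sum.inr (mkI G k d ⟨n, hn⟩)) = Sum.inr (mkI H k e ⟨n, hn⟩)
        ∧ f (Pv d ⟨n, hn⟩) = Pv e ⟨n, hn⟩ := by
    intro n
    induction n with
    | zero =>
      intro hn
      refine ⟨h1, ?_⟩
      unfold Pv
      rw [dif_pos rfl, dif_pos rfl]
      exact h0
    | succ n ih =>
      intro hn
      have hn' : n < k := by omega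
      obtain ⟨hx, hp⟩ := ih hn'
      have hs := step f hf hx hp
      have hSvG : Sv d ⟨n, hn'⟩ = Sum.inr (mkI G k d ⟨n + 1, hn⟩) := by
        unfold Sv
        rw [dif_neg (by simp; omega)]
      have hSvH : Sv e ⟨n, hn'⟩ = Sum.inr (mkI H k e ⟨n + 1, hn⟩) := by
        unfold Sv
        rw [dif_neg (by simp; omega)]
      have hPvG : Pv d ⟨n + 1, hn⟩ = Sum.inr (mkI G k d ⟨n, hn'⟩) := by
        unfold Pv
        rw [dif_neg (by simp)]
        congr 1
      have hPvH : Pv e ⟨n + 1, hn⟩ = Sum.inr (mkI H k e ⟨n, hn'⟩) := by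
        unfold Pv
        rw [dif_neg (by simp)]
        congr 1
      refine ⟨?_, ?_⟩
      · rw [← hSvG, ← hSvH]; exact hs
      · rw [hPvG, hPvH]; exact hx
  exact fun i => main i.1 i.2

lemma chain_end (f : Subdivision G k →g Subdivision H k) (hf : GraphHomLocallyInjective f)
    {d : G.Dart} {e : H.Dart} (hk : 0 < k)
    (h0 : f (Sum.inl d.fst) = Sum.inl e.fst)
    (h1 : f (Sum.inr (mkI G k d ⟨0, hk⟩)) = Sum.inr (mkI H k e ⟨0, hk⟩)) :
    f (Sum.inl d.snd) = Sum.inl e.snd := by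
  obtain ⟨hx, hp⟩ := chain f hf hk h0 h1 ⟨k - 1, by omega⟩
  have hs := step f hf hx hp
  have hSvG : Sv d (⟨k - 1, by omega⟩ : Fin k) = Sum.inl d.snd := by
    unfold Sv; rw [dif_pos rfl]
  have hSvH : Sv e (⟨k - 1, by omega⟩ : Fin k) = Sum.inl e.snd := by
    unfold Sv; rw [dif_pos rfl]
  rw [hSvG, hSvH] at hs
  exact hs

lemma propagate (f : Subdivision G k →g Subdivision H k) (hf : GraphHomLocallyInjective f)
    (hk : 0 < k) {u : V} {b : W}
    (hu : f (Sum.inl u) = Sum.inl b) {d : G.Dart} (hd : d.fst = u) :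
    ∃ e : H.Dart, e.fst = b ∧
      f (Sum.inr (mkI G k d ⟨0, hk⟩)) = Sum.inr (mkI H k e ⟨0, hk⟩) ∧
      f (Sum.inl d.snd) = Sum.inl e.snd := by
  have h1 := f.map_adj (adj_first d ⟨0, hk⟩ rfl)
  rw [hd, hu] at h1
  obtain ⟨e, heb, j, hj, hy⟩ := adj_inl_elim h1
  have hj' : j = ⟨0, hk⟩ := Fin.ext hj
  subst hj'
  have h0' : f (Sum.inl d.fst) = Sum.inl e.fst := by rw [hd, hu, heb]
  exact ⟨e, heb, hy, chain_end f hf hk h0' hy⟩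

lemma dart_ne_of_snd_ne {u v1 v2 : V} (h1 : G.Adj u v1) (h2 : G.Adj u v2) (h : v1 ≠ v2) :
    (⟨(u, v1), h1⟩ : G.Dart) ≠ ⟨(u, v2), h2⟩ :=
  fun hd => h (congrArg (fun t => t.toProd.2) hd)

lemma first_vertex_ne (hk : 0 < k) {u v1 v2 : V} (h1 : G.Adj u v1) (h2 : G.Adj u v2)
    (h : v1 ≠ v2) :
    (Sum.inr (mkI G k ⟨(u, v1), h1⟩ ⟨0, hk⟩) : SubdivVertex G k) ≠
      Sum.inr (mkI G k ⟨(u, v2), h2⟩ ⟨0, hk⟩) :=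
  fun h' => first_ne_first (d := ⟨(u, v1), h1⟩) (e := ⟨(u, v2), h2⟩) rfl rfl rfl
    (dart_ne_of_snd_ne h1 h2 h) (Sum.inr.inj h')

lemma two_of_three {α : Type*} {a b c p q : α} (ha : a = p ∨ a = q) (hb : b = p ∨ b = q)
    (hc : c = p ∨ c = q) (hab : a ≠ b) (hac : a ≠ c) (hbc : b ≠ c) : False := by
  rcases ha with rfl | rfl <;> rcases hb with h | h <;> rcases hc with h' | h' <;> simp_all

end Subdiv
end Aux

/-- Let `r ≥ 1` and let `G` be a connected subcubic graph with at least one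
vertex of degree 3.  Then there is a locally injective homomorphism from `G`
to `K₄` if and only if there is one from `G^r` to `K₄^r`. -/
theorem statement5 {V : Type*} [Fintype V] (G : SimpleGraph V)
    [DecidableRel G.Adj] (r : ℕ) (hr : 1 ≤ r) (hconn : G.Connected)
    (hcubic : ∀ v : V, G.degree v ≤ 3) (hdeg3 : ∃ v : V, G.degree v = 3) :
    (∃ f : G →g SimpleGraph.completeGraph (Fin 4), GraphHomLocallyInjective f) ↔
      (∃ f : Subdivision G r →g Subdivision (SimpleGraph.completeGraph (Fin 4)) r,
        GraphHomLocallyInjective f) := by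
  have hk : 0 < r := hr
  constructor
  · rintro ⟨f, hf⟩
    exact ⟨Subdiv.subdivHom f, Subdiv.subdivHom_locInj f hf⟩
  · rintro ⟨F, hF⟩
    obtain ⟨w, hw3⟩ := hdeg3
    -- Step 1: the degree-3 vertex maps to a branch vertex.
    have hw : ∃ b, F (Sum.inl w) = Sum.inl b := by
      rcases hFw : F (Sum.inl w) with b | x
      · exact ⟨b, rfl⟩
      · exfalso
        classical
        obtain ⟨⟨d0, i0⟩, hx⟩ := Quot.exists_rep x
        obtain ⟨v1, v2, v3, h12, h13, h23, hset⟩ := Finset.card_eq_three.mp hw3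
        have ha1 : G.Adj w v1 := by rw [← SimpleGraph.mem_neighborFinset, hset]; simp
        have ha2 : G.Adj w v2 := by rw [← SimpleGraph.mem_neighborFinset, hset]; simp
        have ha3 : G.Adj w v3 := by rw [← SimpleGraph.mem_neighborFinset, hset]; simp
        have hadj1 : (Subdivision G r).Adj (Sum.inl w)
            (Sum.inr (Subdiv.mkI G r ⟨(w, v1), ha1⟩ ⟨0, hk⟩)) :=
          Subdiv.adj_first ⟨(w, v1), ha1⟩ ⟨0, hk⟩ rfl
        have hadj2 : (Subdivision G r).Adj (Sum.inl w)
            (Sum.inr (Subdiv.mkI G r ⟨(w, v2), ha2⟩ ⟨0, hk⟩)) :=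
          Subdiv.adj_first ⟨(w, v2), ha2⟩ ⟨0, hk⟩ rfl
        have hadj3 : (Subdivision G r).Adj (Sum.inl w)
            (Sum.inr (Subdiv.mkI G r ⟨(w, v3), ha3⟩ ⟨0, hk⟩)) :=
          Subdiv.adj_first ⟨(w, v3), ha3⟩ ⟨0, hk⟩ rfl
        have hne12 := Subdiv.first_vertex_ne hk ha1 ha2 h12
        have hne13 := Subdiv.first_vertex_ne hk ha1 ha3 h13
        have hne23 := Subdiv.first_vertex_ne hk ha2 ha3 h23
        have hm1 := (SimpleGraph.mem_neighborSet _ _ _).mpr hadj1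
        have hm2 := (SimpleGraph.mem_neighborSet _ _ _).mpr hadj2
        have hm3 := (SimpleGraph.mem_neighborSet _ _ _).mpr hadj3
        have hFne12 := fun h => hne12 (hF (Sum.inl w) hm1 hm2 h)
        have hFne13 := fun h => hne13 (hF (Sum.inl w) hm1 hm3 h)
        have hFne23 := fun h => hne23 (hF (Sum.inl w) hm2 hm3 h)
        have hA1 := F.map_adj hadj1
        have hA2 := F.map_adj hadj2
        have hA3 := F.map_adj hadj3
        rw [hFw, ← hx] at hA1 hA2 hA3
        exact Subdiv.two_of_three (Subdiv.nbhd_inr hA1) (Subdiv.nbhd_inr hA2)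
          (Subdiv.nbhd_inr hA3) hFne12 hFne13 hFne23
    obtain ⟨b0, hb0⟩ := hw
    -- Step 2: branch vertices map to branch vertices, by connectivity.
    have hstep : ∀ {u v : V}, G.Adj u v → (∃ b, F (Sum.inl u) = Sum.inl b) →
        ∃ b, F (Sum.inl v) = Sum.inl b := by
      rintro u v hadj ⟨b, hb⟩
      obtain ⟨e, -, -, hend⟩ := Subdiv.propagate F hF hk hb (d := ⟨(u, v), hadj⟩) rfl
      exact ⟨e.snd, hend⟩
    have hwalk : ∀ {a c : V}, G.Walk a c → (∃ b, F (Sum.inl a) = Sum.inl b) →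
        ∃ b, F (Sum.inl c) = Sum.inl b := by
      intro a c p
      induction p with
      | nil => exact id
      | cons h _ ih => exact fun hB => ih (hstep h hB)
    have hB : ∀ v, ∃ b, F (Sum.inl v) = Sum.inl b := fun v =>
      hwalk (hconn.preconnected w v).some ⟨b0, hb0⟩
    choose g hg using hB
    have hdart : ∀ d : G.Dart, ∃ e : (SimpleGraph.completeGraph (Fin 4)).Dart, e.fst = g d.fst ∧
        F (Sum.inr (Subdiv.mkI G r d ⟨0, hk⟩)) =
          Sum.inr (Subdiv.mkI (SimpleGraph.completeGraph (Fin 4)) r e ⟨0, hk⟩) ∧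
        g d.snd = e.snd := by
      intro d
      obtain ⟨e, he1, he2, he3⟩ := Subdiv.propagate F hF hk (hg d.fst) rfl
      exact ⟨e, he1, he2, Sum.inl.inj ((hg d.snd).symm.trans he3)⟩
    choose e he1 he2 he3 using hdart
    refine ⟨⟨g, ?_⟩, ?_⟩
    · intro u v hadj
      show g u ≠ g v
      have h1 : (e ⟨(u, v), hadj⟩).fst = g u := he1 ⟨(u, v), hadj⟩
      have h2 : g v = (e ⟨(u, v), hadj⟩).snd := he3 ⟨(u, v), hadj⟩
      rw [← h1, h2]
      exact (e ⟨(u, v), hadj⟩).adj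
    · intro u v1 hv1 v2 hv2 heq
      rw [SimpleGraph.mem_neighborSet] at hv1 hv2
      by_contra hne
      have hd12 : (⟨(u, v1), hv1⟩ : G.Dart) ≠ ⟨(u, v2), hv2⟩ :=
        Subdiv.dart_ne_of_snd_ne hv1 hv2 hne
      have hn12 : Subdiv.mkI G r ⟨(u, v1), hv1⟩ ⟨0, hk⟩ ≠ Subdiv.mkI G r ⟨(u, v2), hv2⟩ ⟨0, hk⟩ :=
        Subdiv.first_ne_first (d := ⟨(u, v1), hv1⟩) (e := ⟨(u, v2), hv2⟩) rfl rfl rfl hd12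
      have d1 : G.Dart := ⟨(u, v1), hv1⟩
      have hee : e (⟨(u, v1), hv1⟩ : G.Dart) = e ⟨(u, v2), hv2⟩ := by
        apply SimpleGraph.Dart.ext
        apply Prod.ext
        · show (e ⟨(u, v1), hv1⟩).fst = (e ⟨(u, v2), hv2⟩).fst
          rw [he1 ⟨(u, v1), hv1⟩, he1 ⟨(u, v2), hv2⟩]
        · show (e ⟨(u, v1), hv1⟩).snd = (e ⟨(u, v2), hv2⟩).snd
          rw [← he3 ⟨(u, v1), hv1⟩, ← he3 ⟨(u, v2), hv2⟩]
          exact heq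
      have hFF : F (Sum.inr (Subdiv.mkI G r ⟨(u, v1), hv1⟩ ⟨0, hk⟩)) =
          F (Sum.inr (Subdiv.mkI G r ⟨(u, v2), hv2⟩ ⟨0, hk⟩)) := by
        rw [he2 ⟨(u, v1), hv1⟩, he2 ⟨(u, v2), hv2⟩, hee]
      have hm1 := (SimpleGraph.mem_neighborSet _ _ _).mpr
        (Subdiv.adj_first (⟨(u, v1), hv1⟩ : G.Dart) ⟨0, hk⟩ rfl)
      have hm2 := (SimpleGraph.mem_neighborSet _ _ _).mpr
        (Subdiv.adj_first (⟨(u, v2), hv2⟩ : G.Dart) ⟨0, hk⟩ rfl)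
      exact hn12 (Sum.inr.inj (hF (Sum.inl u) hm1 hm2 hFF))
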